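/- Let (G,f) be a P-filtered graph and let e, d be distinct edges of G. If e is collapsible and d is not collapsible in (G,f), then d is not collapsible in the simple collapse (G↓e, f). Likewise, if e is collapsible and d is not deletable in (G,f), then d is not deletable in (G↓e, f). -/

import Mathlib

structure Grph where
  V : Type
  E : Type
  [fintV : Fintype V]
  [fintE : Fintype E]
  [decV : DecidableEq V]
  [decE : DecidableEq E]
  bnd : E → V × V

attribute [instance] Grph.fintV Grph.fintE Grph.decV Grph.decE

/-- boundary map k⟨E⟩ → k⟨V⟩, e ↦ e₁ - e₀ -/
noncomputable def Grph.d (G : Grph) (k : Type) [Field k] :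
    (G.E →₀ k) →ₗ[k] (G.V →₀ k) :=
  Finsupp.linearCombination k fun e =>
    Finsupp.single (G.bnd e).2 1 - Finsupp.single (G.bnd e).1 1

def Grph.adj (G : Grph) (v w : G.V) : Prop :=
  ∃ e, G.bnd e = (v, w) ∨ G.bnd e = (w, v)

structure FGrph (P : Type) [PartialOrder P] extends Grph where
  fV : V → P
  fE : E → P
  mono0 : ∀ e, fV (bnd e).1 ≤ fE e
  mono1 : ∀ e, fV (bnd e).2 ≤ fE e

variable {P : Type} [PartialOrder P]

/-- boundary map of the sublevel graph at grade r -/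
noncomputable def FGrph.dr (G : FGrph P) (k : Type) [Field k] (r : P) :
    ({e : G.E // G.fE e ≤ r} →₀ k) →ₗ[k] ({v : G.V // G.fV v ≤ r} →₀ k) :=
  Finsupp.linearCombination k fun e =>
    Finsupp.single ⟨(G.bnd e.1).2, le_trans (G.mono1 e.1) e.2⟩ 1 -
    Finsupp.single ⟨(G.bnd e.1).1, le_trans (G.mono0 e.1) e.2⟩ 1

noncomputable def FGrph.vmap (G : FGrph P) (k : Type) [Field k] {r s : P} (h : r ≤ s) :
    ({v : G.V // G.fV v ≤ r} →₀ k) →ₗ[k] ({v : G.V // G.fV v ≤ s} →₀ k) :=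
  Finsupp.lmapDomain k k fun v => ⟨v.1, le_trans v.2 h⟩

noncomputable def FGrph.emap (G : FGrph P) (k : Type) [Field k] {r s : P} (h : r ≤ s) :
    ({e : G.E // G.fE e ≤ r} →₀ k) →ₗ[k] ({e : G.E // G.fE e ≤ s} →₀ k) :=
  Finsupp.lmapDomain k k fun e => ⟨e.1, le_trans e.2 h⟩

lemma FGrph.dNat (G : FGrph P) (k : Type) [Field k] {r s : P} (h : r ≤ s) :
    (G.dr k s).comp (G.emap k h) = (G.vmap k h).comp (G.dr k r) := by
  apply Finsupp.lhom_ext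
  intro e a
  show (G.dr k s) ((G.emap k h) (Finsupp.single e a)) =
    (G.vmap k h) ((G.dr k r) (Finsupp.single e a))
  rw [FGrph.emap, Finsupp.lmapDomain_apply, Finsupp.mapDomain_single, FGrph.dr,
    Finsupp.linearCombination_single, FGrph.dr, Finsupp.linearCombination_single,
    map_smul, map_sub, FGrph.vmap, Finsupp.lmapDomain_apply, Finsupp.lmapDomain_apply,
    Finsupp.mapDomain_single, Finsupp.mapDomain_single]

/-- 0-dim homology of the sublevel graph at r -/
noncomputable abbrev FGrph.H0at (G : FGrph P) (k : Type) [Field k] (r : P) :=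
  ({v : G.V // G.fV v ≤ r} →₀ k) ⧸ LinearMap.range (G.dr k r)

noncomputable def FGrph.H0map (G : FGrph P) (k : Type) [Field k] {r s : P} (h : r ≤ s) :
    G.H0at k r →ₗ[k] G.H0at k s :=
  Submodule.mapQ _ _ (G.vmap k h) (by
    rintro x ⟨y, rfl⟩
    exact ⟨G.emap k h y, by
      have := LinearMap.congr_fun (G.dNat k h) y
      simpa using this⟩)

noncomputable abbrev FGrph.H1at (G : FGrph P) (k : Type) [Field k] (r : P) :=
  LinearMap.ker (G.dr k r)

noncomputable def FGrph.H1map (G : FGrph P) (k : Type) [Field k] {r s : P} (h : r ≤ s) :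
    G.H1at k r →ₗ[k] G.H1at k s :=
  (G.emap k h).restrict (p := LinearMap.ker (G.dr k r)) (q := LinearMap.ker (G.dr k s))
    (by
      intro x hx
      have := LinearMap.congr_fun (G.dNat k h) x
      simp only [LinearMap.mem_ker] at hx ⊢
      simp only [LinearMap.coe_comp, Function.comp_apply] at this
      rw [this, hx, map_zero])

def FGrph.adjAt (G : FGrph P) (r : P) (a b : G.V) : Prop :=
  ∃ e, G.fE e ≤ r ∧ (G.bnd e = (a, b) ∨ G.bnd e = (b, a))

def FGrph.connAt (G : FGrph P) (r : P) : G.V → G.V → Prop :=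
  Relation.ReflTransGen (G.adjAt r)

def FGrph.pi0At (G : FGrph P) (r : P) :=
  Quot (fun a b : {v : G.V // G.fV v ≤ r} => G.adjAt r a.1 b.1)

def FGrph.Collapsible (G : FGrph P) (e : G.E) : Prop :=
  (G.bnd e).1 ≠ (G.bnd e).2 ∧
    (G.fE e = G.fV (G.bnd e).1 ∨ G.fE e = G.fV (G.bnd e).2)

def FGrph.delete (G : FGrph P) (e : G.E) : FGrph P where
  V := G.V
  E := {d : G.E // d ≠ e}
  bnd d := G.bnd d.1
  fV := G.fV
  fE d := G.fE d.1
  mono0 d := G.mono0 d.1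
  mono1 d := G.mono1 d.1

def FGrph.Deletable (G : FGrph P) (e : G.E) : Prop :=
  (G.delete e).connAt (G.fE e) (G.bnd e).1 (G.bnd e).2

def FGrph.collapse (G : FGrph P) (e : G.E) (x y : G.V) (hxy : y ≠ x)
    (hf : G.fV y ≤ G.fV x) : FGrph P where
  V := {v : G.V // v ≠ x}
  E := {d : G.E // d ≠ e}
  bnd d :=
    (if h : (G.bnd d.1).1 = x then ⟨y, hxy⟩ else ⟨(G.bnd d.1).1, h⟩,
     if h : (G.bnd d.1).2 = x then ⟨y, hxy⟩ else ⟨(G.bnd d.1).2, h⟩)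
  fV v := G.fV v.1
  fE d := G.fE d.1
  mono0 d := by
    dsimp only
    split
    · exact le_trans hf (by rw [← ‹(G.bnd d.1).1 = x›]; exact G.mono0 d.1)
    · exact G.mono0 d.1
  mono1 d := by
    dsimp only
    split
    · exact le_trans hf (by rw [← ‹(G.bnd d.1).2 = x›]; exact G.mono1 d.1)
    · exact G.mono1 d.1


lemma FGrph.adjAt_symm (G : FGrph P) (r : P) : Symmetric (G.adjAt r) := by
  rintro a b ⟨c, hc, h | h⟩
  exacts [⟨c, hc, Or.inr h⟩, ⟨c, hc, Or.inl h⟩]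

lemma FGrph.connAt_symm (G : FGrph P) (r : P) {a b : G.V}
    (h : G.connAt r a b) : G.connAt r b a := by
  haveI : Std.Symm (G.adjAt r) := ⟨G.adjAt_symm r⟩
  have hs : Std.Symm (Relation.ReflTransGen (G.adjAt r)) := Relation.ReflTransGen.symmetric
  exact hs.symm _ _ h

/-- connect a vertex to its image under the collapse projection, inside `G.delete d` -/
lemma pi_conn (G : FGrph P) (e d : G.E) (hd : d ≠ e) (x y : G.V)
    (hbnd : G.bnd e = (x, y) ∨ G.bnd e = (y, x)) (hfe : G.fE e = G.fV x)
    (r : P) (v : G.V) (hv : v = x → G.fV x ≤ r) :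
    (G.delete d).connAt r v (if v = x then y else v) := by
  by_cases hvx : v = x
  · refine (congrArg ((G.delete d).connAt r v) (if_pos hvx : (if v = x then y else v) = y)).mpr ?_
    subst hvx
    exact Relation.ReflTransGen.single
      ⟨⟨e, fun h => hd h.symm⟩, by rw [show (G.delete d).fE ⟨e, fun h => hd h.symm⟩ = G.fE e from rfl, hfe]; exact hv rfl,
        by simpa [FGrph.delete] using hbnd⟩
  · exact (congrArg ((G.delete d).connAt r v) (if_neg hvx : (if v = x then y else v) = v)).mpr Relation.ReflTransGen.refl

lemma collapse_conn_lift (G : FGrph P) (e d : G.E) (hd : d ≠ e) (x y : G.V) (hne : y ≠ x)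
    (hbnd : G.bnd e = (x, y) ∨ G.bnd e = (y, x)) (hfe : G.fE e = G.fV x)
    (hf : G.fV y ≤ G.fV x) (r : P)
    {a b : {v : G.V // v ≠ x}}
    (h : ((G.collapse e x y hne hf).delete ⟨d, hd⟩).connAt r a b) :
    (G.delete d).connAt r a.1 b.1 := by
  induction h with
  | refl => exact Relation.ReflTransGen.refl
  | @tail b' c' _ hstep ih =>
    refine ih.trans ?_
    obtain ⟨⟨⟨cc, hce⟩, hcd⟩, hcr, hc⟩ := hstep
    have hcd' : cc ≠ d := fun h => hcd (by subst h; rfl)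
    have hcr' : G.fE cc ≤ r := hcr
    have key : (G.delete d).connAt r (if (G.bnd cc).1 = x then y else (G.bnd cc).1)
        (if (G.bnd cc).2 = x then y else (G.bnd cc).2) := by
      have h1 : (G.delete d).connAt r (G.bnd cc).1
          (if (G.bnd cc).1 = x then y else (G.bnd cc).1) :=
        pi_conn G e d hd x y hbnd hfe r _ (fun hx => hx ▸ le_trans (G.mono0 cc) hcr')
      have h2 : (G.delete d).connAt r (G.bnd cc).2
          (if (G.bnd cc).2 = x then y else (G.bnd cc).2) :=
        pi_conn G e d hd x y hbnd hfe r _ (fun hx => hx ▸ le_trans (G.mono1 cc) hcr')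
      have hadj : (G.delete d).adjAt r (G.bnd cc).1 (G.bnd cc).2 :=
        ⟨⟨cc, hcd'⟩, hcr', Or.inl rfl⟩
      exact (FGrph.connAt_symm _ _ h1).trans ((Relation.ReflTransGen.single hadj).trans h2)
    have hb1 : (((G.collapse e x y hne hf).delete ⟨d, hd⟩).bnd ⟨⟨cc, hce⟩, hcd⟩).1.1
        = (if (G.bnd cc).1 = x then y else (G.bnd cc).1) := by
      simp [FGrph.collapse, FGrph.delete, apply_dite Subtype.val]
    have hb2 : (((G.collapse e x y hne hf).delete ⟨d, hd⟩).bnd ⟨⟨cc, hce⟩, hcd⟩).2.1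
        = (if (G.bnd cc).2 = x then y else (G.bnd cc).2) := by
      simp [FGrph.collapse, FGrph.delete, apply_dite Subtype.val]
    rcases hc with hc | hc
    · have e1 : b'.1 = (if (G.bnd cc).1 = x then y else (G.bnd cc).1) := by
        rw [← hb1, hc]
      have e2 : c'.1 = (if (G.bnd cc).2 = x then y else (G.bnd cc).2) := by
        rw [← hb2, hc]
      rw [e1, e2]; exact key
    · have e1 : c'.1 = (if (G.bnd cc).1 = x then y else (G.bnd cc).1) := by
        rw [← hb1, hc]
      have e2 : b'.1 = (if (G.bnd cc).2 = x then y else (G.bnd cc).2) := by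
        rw [← hb2, hc]
      rw [e1, e2]; exact FGrph.connAt_symm _ _ key

/-- if `e` is a collapsible edge (with endpoints `x`, `y`, where
`f(e) = f(x)` and `x` is the endpoint removed by the simple collapse `G↓e`), and `d ≠ e`
is an edge that is not collapsible (resp. not deletable) in `(G,f)`, then `d` is not
collapsible (resp. not deletable) in `(G↓e, f)`. -/
theorem not_collapsible_not_deletable_after_collapse (G : FGrph P) (e d : G.E)
    (hd : d ≠ e) (x y : G.V) (hne : y ≠ x)
    (hbnd : G.bnd e = (x, y) ∨ G.bnd e = (y, x)) (hfe : G.fE e = G.fV x)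
    (hf : G.fV y ≤ G.fV x) :
    (¬ G.Collapsible d → ¬ (G.collapse e x y hne hf).Collapsible ⟨d, hd⟩) ∧
    (¬ G.Deletable d → ¬ (G.collapse e x y hne hf).Deletable ⟨d, hd⟩) := by
  have hb1 : ((G.collapse e x y hne hf).bnd ⟨d, hd⟩).1.1
      = (if (G.bnd d).1 = x then y else (G.bnd d).1) := by
    simp [FGrph.collapse, apply_dite Subtype.val]
  have hb2 : ((G.collapse e x y hne hf).bnd ⟨d, hd⟩).2.1
      = (if (G.bnd d).2 = x then y else (G.bnd d).2) := by
    simp [FGrph.collapse, apply_dite Subtype.val]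
  constructor
  · intro hnc hc
    apply hnc
    obtain ⟨h1, h2⟩ := hc
    constructor
    · intro heq
      exact h1 (Subtype.ext (by rw [hb1, hb2, heq]))
    · rcases h2 with h2 | h2
      · have h2' : G.fE d = G.fV (if (G.bnd d).1 = x then y else (G.bnd d).1) := by
          rw [← hb1]; exact h2
        by_cases hx : (G.bnd d).1 = x
        · rw [if_pos hx] at h2'
          have hx1 : G.fV x ≤ G.fE d := hx ▸ G.mono0 d
          have hfx : G.fE d = G.fV x := le_antisymm (h2'.trans_le hf) hx1
          exact Or.inl (by rw [hx]; exact hfx)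
        · rw [if_neg hx] at h2'
          exact Or.inl h2'
      · have h2' : G.fE d = G.fV (if (G.bnd d).2 = x then y else (G.bnd d).2) := by
          rw [← hb2]; exact h2
        by_cases hx : (G.bnd d).2 = x
        · rw [if_pos hx] at h2'
          have hx1 : G.fV x ≤ G.fE d := hx ▸ G.mono1 d
          have hfx : G.fE d = G.fV x := le_antisymm (h2'.trans_le hf) hx1
          exact Or.inr (by rw [hx]; exact hfx)
        · rw [if_neg hx] at h2'
          exact Or.inr h2'
  · intro hnd hdel
    apply hnd
    have hlift := collapse_conn_lift G e d hd x y hne hbnd hfe hf (G.fE d) hdel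
    rw [hb1, hb2] at hlift
    have p1 : (G.delete d).connAt (G.fE d) (G.bnd d).1
        (if (G.bnd d).1 = x then y else (G.bnd d).1) :=
      pi_conn G e d hd x y hbnd hfe _ _ (fun hx => hx ▸ G.mono0 d)
    have p2 : (G.delete d).connAt (G.fE d) (G.bnd d).2
        (if (G.bnd d).2 = x then y else (G.bnd d).2) :=
      pi_conn G e d hd x y hbnd hfe _ _ (fun hx => hx ▸ G.mono1 d)
    exact p1.trans (hlift.trans (FGrph.connAt_symm _ _ p2))
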